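/- Let (p_1,…,p_N) be a probability distribution on [N], and let κ := (1/2)∑_{i=1}^N |p_i − 1/N|. Let H* be the set of indices i ∈ [N] such that p_i ≥ (1 + κ/2)/N. Then ∑_{i ∈ H*} p_i ≥ κ/2. -/

import Mathlib

open Finset

/-- with κ := (1/2)∑|p_i − 1/N|, the set H* of "very heavy" indices
(those with p_i ≥ (1 + κ/2)/N) has total weight at least κ/2. -/
theorem very_heavy_elements {N : ℕ} (p : Fin N → ℝ)
    (hp : ∀ i, 0 ≤ p i) (hsum : ∑ i, p i = 1)
    (κ : ℝ) (hκ : κ = (1 / 2) * ∑ i, |p i - 1 / N|) :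
    κ / 2 ≤ ∑ i ∈ univ.filter (fun i : Fin N => (1 + κ / 2) / N ≤ p i), p i := by
  have hN : 0 < N := by
    rcases Nat.eq_zero_or_pos N with h | h
    · subst h; simp at hsum
    · exact h
  have hNr : (0:ℝ) < N := Nat.cast_pos.mpr hN
  set f : Fin N → ℝ := fun i => p i - 1 / N with hf
  have hsumf : ∑ i, f i = 0 := by
    have : ∑ i : Fin N, f i = (∑ i, p i) - ∑ i : Fin N, (1 / N : ℝ) :=
      Finset.sum_sub_distrib _ _
    rw [this, hsum, Finset.sum_const, Finset.card_univ, Fintype.card_fin]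
    rw [nsmul_eq_mul, mul_one_div_cancel hNr.ne', sub_self]
  have hκ0 : 0 ≤ κ := by
    rw [hκ]; positivity
  set S := univ.filter (fun i : Fin N => (0:ℝ) ≤ f i) with hS
  have hκS : κ = ∑ i ∈ S, f i := by
    have h1 : ∑ i ∈ S, f i + ∑ i ∈ Sᶜ, f i = 0 := by
      rw [Finset.sum_add_sum_compl]; exact hsumf
    have h2 : ∑ i, |f i| = ∑ i ∈ S, |f i| + ∑ i ∈ Sᶜ, |f i| :=
      (Finset.sum_add_sum_compl S _).symm
    have h3 : ∑ i ∈ S, |f i| = ∑ i ∈ S, f i := by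
      apply Finset.sum_congr rfl
      intro i hi
      rw [hS, Finset.mem_filter] at hi
      exact abs_of_nonneg hi.2
    have h4 : ∑ i ∈ Sᶜ, |f i| = ∑ i ∈ Sᶜ, -f i := by
      apply Finset.sum_congr rfl
      intro i hi
      rw [hS, Finset.compl_filter, Finset.mem_filter] at hi
      exact abs_of_neg (lt_of_not_ge hi.2)
    rw [hκ, h2, h3, h4, Finset.sum_neg_distrib]
    linarith
  set A := univ.filter (fun i : Fin N => (1 + κ / 2) / N ≤ p i) with hA
  have hAS : A ⊆ S := by
    intro i hi
    rw [hA, Finset.mem_filter] at hi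
    rw [hS, Finset.mem_filter]
    refine ⟨Finset.mem_univ i, ?_⟩
    have h1N : (1:ℝ) / N ≤ (1 + κ / 2) / N := by gcongr; linarith
    simp only [hf]
    linarith [hi.2]
  have hsplit : ∑ i ∈ S, f i = ∑ i ∈ A, f i + ∑ i ∈ S \ A, f i := by
    rw [← Finset.sum_sdiff hAS]; ring
  have hB : ∑ i ∈ S \ A, f i ≤ κ / 2 := by
    have hbound : ∀ i ∈ S \ A, f i ≤ κ / 2 / N := by
      intro i hi
      rw [Finset.mem_sdiff, hA, Finset.mem_filter] at hi
      have hpi : p i < (1 + κ / 2) / N := by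
        by_contra h
        exact hi.2 (Finset.mem_filter.mpr ⟨Finset.mem_univ i, le_of_not_gt h⟩)
      simp only [hf]
      have : (1 + κ / 2) / N = 1 / N + κ / 2 / N := by ring
      linarith
    calc ∑ i ∈ S \ A, f i ≤ ∑ i ∈ S \ A, (κ / 2 / N) := Finset.sum_le_sum hbound
      _ = (S \ A).card * (κ / 2 / N) := by rw [Finset.sum_const]; ring
      _ ≤ N * (κ / 2 / N) := by
          apply mul_le_mul_of_nonneg_right _ (by positivity)
          have : (S \ A).card ≤ N := by
            have := Finset.card_le_card (Finset.subset_univ (S \ A))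
            simpa using this
          exact_mod_cast this
      _ = κ / 2 := by field_simp
  have hAp : ∑ i ∈ A, f i ≤ ∑ i ∈ A, p i := by
    apply Finset.sum_le_sum
    intro i _
    simp only [hf]
    have : (0:ℝ) ≤ 1 / N := by positivity
    linarith
  linarith [hκS, hsplit, hB, hAp]
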